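/- Let N ≥ 1, let n_0, n_1, …, n_N be positive integers with n_0 = n_N, and for l = 1, …, N let A_l be an n_{l−1}×n_l real matrix. Let g ∈ ℝ^{n_0} and suppose β ∈ ℝ^{n_N} satisfies β = φ(A_1·φ(A_2·φ(⋯φ(A_N·β)⋯)) + g). If there exists λ < 1 such that ‖A_l‖_∞ ≤ λ for all l = 1, …, N and ‖g‖_∞ ≤ 1 − λ^N, then ‖β‖_∞ ≤ ‖g‖_∞/(1 − λ^N) ≤ 1, every intermediate vector φ(A_l·φ(⋯φ(A_N·β)⋯)) has sup norm at most λ^{N−l+1}, all clamps are inactive, and β = A_1·A_2·⋯·A_N·β + g. -/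

import Mathlib

/-- Sup norm `‖x‖_∞ = max_i |x_i|`. -/
noncomputable def supNorm {n : ℕ} (x : Fin n → ℝ) : ℝ := ⨆ i, |x i|

/-- Operator norm of a matrix with respect to sup norms, `‖A‖_∞`. -/
noncomputable def supOpNorm {m n : ℕ} (A : Matrix (Fin m) (Fin n) ℝ) : ℝ :=
  sInf {c : ℝ | 0 ≤ c ∧ ∀ x : Fin n → ℝ, supNorm (A.mulVec x) ≤ c * supNorm x}

/-- Coordinatewise clamp `φ(x)_i = min(1, max(−1, x_i))`. -/
noncomputable def clamp1 {n : ℕ} (x : Fin n → ℝ) : Fin n → ℝ := fun i => min 1 (max (-1) (x i))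

/-- `chainA N n A l` is the matrix product `A_l ⬝ A_{l+1} ⬝ ⋯ ⬝ A_N`
(the identity matrix when `l = N + 1`). -/
noncomputable def chainA (N : ℕ) (n : ℕ → ℕ)
    (A : (l : ℕ) → Matrix (Fin (n (l - 1))) (Fin (n l)) ℝ)
    (l : ℕ) : Matrix (Fin (n (l - 1))) (Fin (n N)) ℝ :=
  if h : l ≤ N then
    let C : Matrix (Fin (n l)) (Fin (n N)) ℝ := chainA N n A (l + 1)
    A l * C
  else
    Matrix.of fun i j => if (i : ℕ) = (j : ℕ) then (1 : ℝ) else 0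
termination_by N + 1 - l
decreasing_by omega



lemma supNorm_nonneg {n : ℕ} (x : Fin n → ℝ) : 0 ≤ supNorm x :=
  Real.iSup_nonneg fun i => abs_nonneg _

lemma abs_le_supNorm {n : ℕ} (x : Fin n → ℝ) (i : Fin n) : |x i| ≤ supNorm x :=
  le_ciSup (Set.Finite.bddAbove (Set.finite_range fun j => |x j|)) i

lemma supNorm_le {n : ℕ} {x : Fin n → ℝ} {c : ℝ} (hc : 0 ≤ c) (h : ∀ i, |x i| ≤ c) :
    supNorm x ≤ c := Real.iSup_le h hc

lemma supOpNorm_nonneg {m n : ℕ} (A : Matrix (Fin m) (Fin n) ℝ) : 0 ≤ supOpNorm A :=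
  Real.sInf_nonneg fun c hc => hc.1

lemma supNorm_mulVec_le {m n : ℕ} (A : Matrix (Fin m) (Fin n) ℝ) (x : Fin n → ℝ) :
    supNorm (A.mulVec x) ≤ supOpNorm A * supNorm x := by
  have hxn := supNorm_nonneg x
  rcases eq_or_lt_of_le hxn with h0 | h0
  · have hx0 : ∀ j, x j = 0 := fun j =>
      abs_eq_zero.1 (le_antisymm (le_trans (abs_le_supNorm x j) h0.ge) (abs_nonneg _))
    have : A.mulVec x = 0 := by
      ext i; simp [Matrix.mulVec, dotProduct, hx0]
    rw [this, ← h0, mul_zero]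
    exact supNorm_le le_rfl fun i => by simp
  · have hne : {c : ℝ | 0 ≤ c ∧ ∀ y : Fin n → ℝ, supNorm (A.mulVec y) ≤ c * supNorm y}.Nonempty := by
      refine ⟨∑ i, ∑ j, |A i j|, Finset.sum_nonneg fun i _ => Finset.sum_nonneg fun j _ => abs_nonneg _, fun y => ?_⟩
      apply supNorm_le
      · exact mul_nonneg (Finset.sum_nonneg fun i _ => Finset.sum_nonneg fun j _ => abs_nonneg _) (supNorm_nonneg y)
      · intro i
        calc |A.mulVec y i| ≤ ∑ j, |A i j * y j| := by
              simpa [Matrix.mulVec, dotProduct] using Finset.abs_sum_le_sum_abs (fun j => A i j * y j) Finset.univ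
          _ ≤ ∑ j, |A i j| * supNorm y := by
              refine Finset.sum_le_sum fun j _ => ?_
              rw [abs_mul]
              exact mul_le_mul_of_nonneg_left (abs_le_supNorm y j) (abs_nonneg _)
          _ = (∑ j, |A i j|) * supNorm y := by rw [Finset.sum_mul]
          _ ≤ (∑ i, ∑ j, |A i j|) * supNorm y := by
              apply mul_le_mul_of_nonneg_right _ (supNorm_nonneg y)
              exact Finset.single_le_sum (f := fun i => ∑ j, |A i j|)
                (fun i _ => Finset.sum_nonneg fun j _ => abs_nonneg _) (Finset.mem_univ i)
    have hdiv : supNorm (A.mulVec x) / supNorm x ≤ supOpNorm A := by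
      apply le_csInf hne
      intro c hc
      exact (div_le_iff₀ h0).2 (hc.2 x)
    calc supNorm (A.mulVec x) = supNorm (A.mulVec x) / supNorm x * supNorm x := by
          field_simp
      _ ≤ supOpNorm A * supNorm x := mul_le_mul_of_nonneg_right hdiv hxn

lemma abs_clamp1_le {t : ℝ} : |min 1 (max (-1) t)| ≤ |t| := by
  rcases le_total t (-1) with h | h
  · rw [max_eq_left h, min_eq_right (by norm_num)]
    rw [abs_of_nonpos (by norm_num : (-1:ℝ) ≤ 0), abs_of_nonpos (h.trans (by norm_num))]
    linarith
  · rw [max_eq_right h]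
    rcases le_total 1 t with h1 | h1
    · rw [min_eq_left h1, abs_of_nonneg (by norm_num : (0:ℝ) ≤ 1),
        abs_of_nonneg (le_trans (by norm_num) h1)]
      linarith
    · rw [min_eq_right h1]

lemma supNorm_clamp1_le {n : ℕ} (x : Fin n → ℝ) : supNorm (clamp1 x) ≤ supNorm x :=
  supNorm_le (supNorm_nonneg x) fun i => le_trans abs_clamp1_le (abs_le_supNorm x i)

lemma clamp1_eq_self {n : ℕ} {x : Fin n → ℝ} (h : supNorm x ≤ 1) : clamp1 x = x := by
  funext i
  have := (abs_le.1 (le_trans (abs_le_supNorm x i) h))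
  simp [clamp1, max_eq_right this.1, min_eq_right this.2]

lemma supNorm_add_le {n : ℕ} (x y : Fin n → ℝ) : supNorm (x + y) ≤ supNorm x + supNorm y :=
  supNorm_le (add_nonneg (supNorm_nonneg x) (supNorm_nonneg y)) fun i =>
    le_trans (abs_add_le _ _) (add_le_add (abs_le_supNorm x i) (abs_le_supNorm y i))

lemma supNorm_cast {m k : ℕ} (h : m = k) (x : Fin m → ℝ) :
    supNorm (fun i : Fin k => x (Fin.cast h.symm i)) = supNorm x := by
  subst h; rfl

/-- Multilayer ∞-norm chain bound (proof of Theorem 2): at a fixed point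
`β = φ(A₁·φ(A₂·φ(⋯φ(A_N·β)⋯)) + g)` with `‖A_l‖_∞ ≤ λ < 1` and `‖g‖_∞ ≤ 1 − λ^N`,
all clamps are inactive and `β = A₁A₂⋯A_N·β + g`.  The nested vector
`w l = φ(A_l·φ(⋯φ(A_N·β)⋯))` is encoded by the family `w` with `w (N+1)` the recast of `β`. -/
theorem stmt10 (N : ℕ) (hN : 1 ≤ N) (n : ℕ → ℕ) (hn : ∀ l, l ≤ N → 0 < n l)
    (h0 : n 0 = n N)
    (A : (l : ℕ) → Matrix (Fin (n (l - 1))) (Fin (n l)) ℝ)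
    (g : Fin (n 0) → ℝ) (β : Fin (n 0) → ℝ)
    (w : (l : ℕ) → Fin (n (l - 1)) → ℝ)
    (hwtop : w (N + 1) = fun i => β (Fin.cast h0.symm i))
    (hw : ∀ l, 2 ≤ l → l ≤ N → w l = clamp1 ((A l).mulVec (w (l + 1))))
    (hβ : β = clamp1 ((A 1).mulVec (w 2) + g))
    (lam : ℝ) (hlam : lam < 1)
    (hA : ∀ l, 1 ≤ l → l ≤ N → supOpNorm (A l) ≤ lam)
    (hg : supNorm g ≤ 1 - lam ^ N) :
    supNorm β ≤ supNorm g / (1 - lam ^ N) ∧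
    supNorm g / (1 - lam ^ N) ≤ 1 ∧
    (∀ l, 2 ≤ l → l ≤ N → supNorm (w l) ≤ lam ^ (N - l + 1)) ∧
    (∀ l, 2 ≤ l → l ≤ N → w l = (A l).mulVec (w (l + 1))) ∧
    β = (A 1).mulVec (w 2) + g ∧
    β = (chainA N n A 1).mulVec (fun i => β (Fin.cast h0.symm i)) + g := by
  have hlam0 : 0 ≤ lam := le_trans (supOpNorm_nonneg (A 1)) (hA 1 le_rfl hN)
  have hpowN : lam ^ N < 1 := pow_lt_one₀ hlam0 hlam (by omega)
  have hden : 0 < 1 - lam ^ N := by linarith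
  have hpow1 : ∀ k, lam ^ k ≤ 1 := fun k => pow_le_one₀ hlam0 hlam.le
  -- chain bound
  have key : ∀ d, ∀ l, 2 ≤ l → l ≤ N + 1 → N + 1 - l = d →
      supNorm (w l) ≤ lam ^ (N + 1 - l) * supNorm β := by
    intro d
    induction d with
    | zero =>
      intro l h2 hle hd
      have hl : l = N + 1 := by omega
      subst hl
      simp only [Nat.sub_self, pow_zero, one_mul, hwtop]
      exact (supNorm_cast h0 β).le
    | succ d ih =>
      intro l h2 hle hd
      have hlN : l ≤ N := by omega
      have ih' := ih (l + 1) (by omega) (by omega) (by omega)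
      calc supNorm (w l)
          = supNorm (clamp1 ((A l).mulVec (w (l + 1)))) := by rw [hw l h2 hlN]
        _ ≤ supNorm ((A l).mulVec (w (l + 1))) := supNorm_clamp1_le _
        _ ≤ supOpNorm (A l) * supNorm (w (l + 1)) := supNorm_mulVec_le _ _
        _ ≤ lam * (lam ^ (N + 1 - (l + 1)) * supNorm β) :=
            mul_le_mul (hA l (by omega) hlN) ih' (supNorm_nonneg _) hlam0
        _ = lam ^ (N + 1 - (l + 1) + 1) * supNorm β := by ring
        _ = lam ^ (N + 1 - l) * supNorm β := by
            rw [show N + 1 - (l + 1) + 1 = N + 1 - l by omega]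
  have hw2 : supNorm (w 2) ≤ lam ^ (N - 1) * supNorm β := by
    have := key (N + 1 - 2) 2 le_rfl (by omega) rfl
    rwa [show N + 1 - 2 = N - 1 by omega] at this
  have hβnn := supNorm_nonneg β
  have hmain : supNorm β ≤ supNorm g / (1 - lam ^ N) := by
    have h1 : supNorm β ≤ lam ^ N * supNorm β + supNorm g := by
      calc supNorm β = supNorm (clamp1 ((A 1).mulVec (w 2) + g)) := by rw [← hβ]
        _ ≤ supNorm ((A 1).mulVec (w 2) + g) := supNorm_clamp1_le _
        _ ≤ supNorm ((A 1).mulVec (w 2)) + supNorm g := supNorm_add_le _ _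
        _ ≤ supOpNorm (A 1) * supNorm (w 2) + supNorm g := by
            linarith [supNorm_mulVec_le (A 1) (w 2)]
        _ ≤ lam * (lam ^ (N - 1) * supNorm β) + supNorm g := by
            have := mul_le_mul (hA 1 le_rfl hN) hw2 (supNorm_nonneg _) hlam0
            linarith
        _ = lam ^ (N - 1 + 1) * supNorm β + supNorm g := by ring
        _ = lam ^ N * supNorm β + supNorm g := by rw [show N - 1 + 1 = N by omega]
    rw [le_div_iff₀ hden]
    nlinarith
  have hle1 : supNorm g / (1 - lam ^ N) ≤ 1 := (div_le_one hden).2 hg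
  have hβ1 : supNorm β ≤ 1 := hmain.trans hle1
  have hwbnd : ∀ l, 2 ≤ l → l ≤ N + 1 → supNorm (w l) ≤ lam ^ (N + 1 - l) := by
    intro l h2 hle
    calc supNorm (w l) ≤ lam ^ (N + 1 - l) * supNorm β := key (N + 1 - l) l h2 hle rfl
      _ ≤ lam ^ (N + 1 - l) * 1 := mul_le_mul_of_nonneg_left hβ1 (pow_nonneg hlam0 _)
      _ = lam ^ (N + 1 - l) := mul_one _
  have goal3 : ∀ l, 2 ≤ l → l ≤ N → supNorm (w l) ≤ lam ^ (N - l + 1) := by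
    intro l h2 hle
    rw [show N - l + 1 = N + 1 - l by omega]
    exact hwbnd l h2 (by omega)
  have goal4 : ∀ l, 2 ≤ l → l ≤ N → w l = (A l).mulVec (w (l + 1)) := by
    intro l h2 hle
    have hb : supNorm ((A l).mulVec (w (l + 1))) ≤ 1 := by
      calc supNorm ((A l).mulVec (w (l + 1)))
          ≤ supOpNorm (A l) * supNorm (w (l + 1)) := supNorm_mulVec_le _ _
        _ ≤ lam * lam ^ (N + 1 - (l + 1)) :=
            mul_le_mul (hA l (by omega) hle) (hwbnd (l + 1) (by omega) (by omega))
              (supNorm_nonneg _) hlam0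
        _ ≤ 1 * 1 := mul_le_mul hlam.le (hpow1 _) (pow_nonneg hlam0 _) zero_le_one
        _ = 1 := mul_one 1
    rw [hw l h2 hle, clamp1_eq_self hb]
  have goal5 : β = (A 1).mulVec (w 2) + g := by
    have hb : supNorm ((A 1).mulVec (w 2) + g) ≤ 1 := by
      calc supNorm ((A 1).mulVec (w 2) + g)
          ≤ supNorm ((A 1).mulVec (w 2)) + supNorm g := supNorm_add_le _ _
        _ ≤ supOpNorm (A 1) * supNorm (w 2) + supNorm g := by
            linarith [supNorm_mulVec_le (A 1) (w 2)]
        _ ≤ lam * lam ^ (N + 1 - 2) + (1 - lam ^ N) := by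
            have := mul_le_mul (hA 1 le_rfl hN) (hwbnd 2 le_rfl (by omega))
              (supNorm_nonneg _) hlam0
            linarith
        _ = lam ^ (N + 1 - 2 + 1) + (1 - lam ^ N) := by ring
        _ = 1 := by rw [show N + 1 - 2 + 1 = N by omega]; ring
    rw [hβ, clamp1_eq_self hb]
  -- chain identity
  have chain : ∀ d, ∀ l, 2 ≤ l → l ≤ N + 1 → N + 1 - l = d →
      (chainA N n A l).mulVec (fun i => β (Fin.cast h0.symm i)) = w l := by
    intro d
    induction d with
    | zero =>
      intro l h2 hle hd
      have hl : l = N + 1 := by omega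
      subst hl
      rw [chainA, dif_neg (by omega : ¬ N + 1 ≤ N)]
      have hid : (Matrix.of fun (i : Fin (n (N + 1 - 1))) (j : Fin (n N)) =>
          if (i : ℕ) = (j : ℕ) then (1 : ℝ) else 0) = (1 : Matrix (Fin (n N)) (Fin (n N)) ℝ) := by
        ext i j
        simp [Matrix.one_apply, Fin.val_inj]
      rw [hid, Matrix.one_mulVec, hwtop]
    | succ d ih =>
      intro l h2 hle hd
      have hlN : l ≤ N := by omega
      have ih' := ih (l + 1) (by omega) (by omega) (by omega)
      have h4 := goal4 l h2 hlN
      rw [chainA, dif_pos hlN]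
      rw [← Matrix.mulVec_mulVec]
      exact (congrArg (A l).mulVec ih').trans h4.symm
  have goal6 : β = (chainA N n A 1).mulVec (fun i => β (Fin.cast h0.symm i)) + g := by
    have hc2 := chain (N + 1 - 2) 2 le_rfl (by omega) rfl
    rw [chainA, dif_pos hN]
    rw [← Matrix.mulVec_mulVec]
    exact goal5.trans (congrArg (fun t => (A 1).mulVec t + g) hc2.symm)
  exact ⟨hmain, hle1, goal3, goal4, goal5, goal6⟩
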